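/- Let 0 < δ < π and let P ⊆ ℝ² be a finite nonempty set. Suppose Q ⊆ P is a subset such that for every integer i with 1 ≤ i ≤ ⌈π/δ⌉, Q contains some point of P maximizing p ↦ ⟨u_i, p⟩ over P and some point of P minimizing p ↦ ⟨u_i, p⟩ over P. Then every point p ∈ P satisfies dist(p, conv(Q)) ≤ δ·diam(P), where conv(Q) is the convex hull of Q and dist denotes Euclidean distance from a point to a set. -/

import Mathlib

set_option maxHeartbeats 1000000


open Real RealInnerProductSpace

/-- The point of the Euclidean plane with coordinates `(a, b)`. -/
noncomputable def pt (a b : ℝ) : EuclideanSpace ℝ (Fin 2) :=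
  (WithLp.equiv 2 (Fin 2 → ℝ)).symm ![a, b]

/-- The diameter of a finite nonempty point set: `max_{p, q ∈ P} ‖p - q‖`. -/
noncomputable def fdiam (P : Finset (EuclideanSpace ℝ (Fin 2))) (hP : P.Nonempty) : ℝ :=
  (P ×ˢ P).sup' (hP.product hP) (fun pq => dist pq.1 pq.2)

lemma inner_pt (a b : ℝ) (x : EuclideanSpace ℝ (Fin 2)) :
    ⟪pt a b, x⟫ = a * x 0 + b * x 1 := by
  simp [pt, PiLp.inner_apply, Fin.sum_univ_two, RCLike.inner_apply, mul_comm]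

lemma norm_pt_one (a b : ℝ) (hab : a ^ 2 + b ^ 2 = 1) : ‖pt a b‖ = 1 := by
  have h : ⟪pt a b, pt a b⟫ = 1 := by
    rw [inner_pt]
    simp [pt]
    nlinarith
  have := real_inner_self_eq_norm_sq (pt a b)
  nlinarith [norm_nonneg (pt a b)]

lemma exists_dir (δ : ℝ) (hδ0 : 0 < δ) (x : ℝ) (hx0 : 0 ≤ x) (hxπ : x ≤ π) :
    ∃ i : ℕ, 1 ≤ i ∧ i ≤ ⌈π/δ⌉₊ ∧ |x - i * δ| ≤ δ := by
  set n := ⌈x/δ⌉₊ with hn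
  refine ⟨max 1 n, le_max_left _ _, ?_, ?_⟩
  · apply max_le
    · exact Nat.one_le_ceil_iff.mpr (div_pos Real.pi_pos hδ0)
    · exact Nat.ceil_le_ceil (by gcongr)
  · rcases Nat.eq_zero_or_pos n with h0 | hpos
    · have hx : x ≤ 0 := by
        have h := Nat.ceil_eq_zero.mp h0
        have := (div_le_iff₀ hδ0).mp h
        linarith
      have hx' : x = 0 := le_antisymm hx hx0
      have hmax1 : max 1 n = 1 := by simp [h0]
      rw [hx', hmax1, Nat.cast_one, one_mul, zero_sub, abs_neg, abs_of_nonneg hδ0.le]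
    · have hmax : max 1 n = n := max_eq_right hpos
      rw [hmax]
      have h1 : x ≤ (n : ℝ) * δ := by
        have := Nat.le_ceil (x / δ)
        rw [div_le_iff₀ hδ0] at this
        exact this
      have h2 : (n : ℝ) * δ < x + δ := by
        have := Nat.ceil_lt_add_one (div_nonneg hx0 hδ0.le)
        calc (n : ℝ) * δ < (x / δ + 1) * δ := by
              apply mul_lt_mul_of_pos_right this hδ0
          _ = x + δ := by field_simp
      rw [abs_sub_le_iff]
      constructor <;> nlinarith

lemma two_sub_two_cos_le (δ : ℝ) (h0 : 0 ≤ δ) (hπ : δ ≤ π) :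
    2 - 2 * Real.cos δ ≤ δ ^ 2 := by
  have h1 : Real.sin (δ / 2) ^ 2 = 1 / 2 - Real.cos (2 * (δ / 2)) / 2 :=
    Real.sin_sq_eq_half_sub _
  have h2 : Real.sin (δ / 2) ≤ δ / 2 := Real.sin_le (by linarith)
  have h3 : 0 ≤ Real.sin (δ / 2) :=
    Real.sin_nonneg_of_nonneg_of_le_pi (by linarith) (by linarith [Real.pi_pos])
  have : 2 * (δ / 2) = δ := by ring
  rw [this] at h1
  nlinarith

theorem extreme_points_hull
    (δ : ℝ) (hδ0 : 0 < δ) (hδπ : δ < Real.pi)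
    (P Q : Finset (EuclideanSpace ℝ (Fin 2))) (hP : P.Nonempty) (hQ : Q.Nonempty)
    (hQP : Q ⊆ P)
    (hmax : ∀ i : ℕ, 1 ≤ i → i ≤ ⌈Real.pi / δ⌉₊ →
      ∃ q ∈ Q, ∀ p ∈ P, ⟪pt (Real.cos (i * δ)) (Real.sin (i * δ)), p⟫ ≤
        ⟪pt (Real.cos (i * δ)) (Real.sin (i * δ)), q⟫)
    (hmin : ∀ i : ℕ, 1 ≤ i → i ≤ ⌈Real.pi / δ⌉₊ →
      ∃ q ∈ Q, ∀ p ∈ P, ⟪pt (Real.cos (i * δ)) (Real.sin (i * δ)), q⟫ ≤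
        ⟪pt (Real.cos (i * δ)) (Real.sin (i * δ)), p⟫) :
    ∀ p ∈ P, Metric.infDist p (convexHull ℝ (Q : Set (EuclideanSpace ℝ (Fin 2)))) ≤
      δ * fdiam P hP := by
  intro p hp
  set K := convexHull ℝ (Q : Set (EuclideanSpace ℝ (Fin 2))) with hK
  have hKconv : Convex ℝ K := convex_convexHull ℝ _
  obtain ⟨q1, hq1⟩ := hQ
  have hKne : K.Nonempty := ⟨q1, subset_convexHull ℝ _ hq1⟩
  have hKcomp : IsCompact K := Q.finite_toSet.isCompact_convexHull ℝ
  obtain ⟨q₀, hq₀K, hq₀d⟩ := hKcomp.exists_infDist_eq_dist hKne p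
  set d := Metric.infDist p K with hdd
  have hfd : ∀ a ∈ P, ∀ b ∈ P, dist a b ≤ fdiam P hP := by
    intro a ha b hb
    have hmem : (a, b) ∈ P ×ˢ P := Finset.mem_product.mpr ⟨ha, hb⟩
    exact Finset.le_sup' (fun pq => dist pq.1 pq.2) hmem
  have hfd0 : 0 ≤ fdiam P hP := le_trans (by simp) (hfd p hp p hp)
  rcases eq_or_lt_of_le (show (0:ℝ) ≤ d from Metric.infDist_nonneg) with hd0 | hd0
  · rw [← hd0]; positivity
  -- d > 0
  have hpq0 : p - q₀ ≠ 0 := by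
    intro h
    rw [sub_eq_zero] at h
    rw [hq₀d, h, dist_self] at hd0
    exact lt_irrefl 0 hd0
  have hnpq : ‖p - q₀‖ = d := by rw [hq₀d, dist_eq_norm]
  set v : EuclideanSpace ℝ (Fin 2) := (‖p - q₀‖)⁻¹ • (p - q₀) with hv
  have hv1 : ‖v‖ = 1 := by
    rw [hv, norm_smul, norm_inv, norm_norm, inv_mul_cancel₀ (norm_ne_zero_iff.mpr hpq0)]
  -- projection characterization
  have hproj : ∀ w ∈ K, ⟪p - q₀, w - q₀⟫ ≤ 0 := by
    have hiInf : ‖p - q₀‖ = ⨅ w : K, ‖p - w‖ := by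
      rw [hnpq, hdd, Metric.infDist_eq_iInf]
      congr 1
    exact (norm_eq_iInf_iff_real_inner_le_zero hKconv hq₀K).mp hiInf
  -- coordinates of v
  set a : ℝ := v 0 with ha
  set b : ℝ := v 1 with hb
  have hab : a ^ 2 + b ^ 2 = 1 := by
    have h1 : ⟪v, v⟫ = a * a + b * b := by
      rw [PiLp.inner_apply, Fin.sum_univ_two, ha, hb]
      simp only [RCLike.inner_apply, conj_trivial]
    have h2 := real_inner_self_eq_norm_sq v
    rw [hv1] at h2
    nlinarith [h1, h2]
  have ha1 : -1 ≤ a ∧ a ≤ 1 := by constructor <;> nlinarith [sq_nonneg b]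
  -- the angle φ
  set φ : ℝ := if 0 ≤ b then Real.arccos a else -Real.arccos a with hφ
  have hφcos : Real.cos φ = a := by
    rw [hφ]; split_ifs <;>
      simp [Real.cos_arccos ha1.1 ha1.2]
  have hφsin : Real.sin φ = b := by
    have hs : Real.sin (Real.arccos a) = Real.sqrt (1 - a ^ 2) := Real.sin_arccos a
    have h1a : 1 - a ^ 2 = b ^ 2 := by linarith
    rw [hφ]; split_ifs with hb0
    · rw [hs, h1a, Real.sqrt_sq_eq_abs, abs_of_nonneg hb0]
    · rw [Real.sin_neg, hs, h1a, Real.sqrt_sq_eq_abs, abs_of_neg (not_le.mp hb0)]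
      ring
  have hφmem : -π ≤ φ ∧ φ ≤ π := by
    have h1 := Real.arccos_nonneg a
    have h2 := Real.arccos_le_pi a
    rw [hφ]; split_ifs <;> constructor <;> linarith
  -- obtain direction w, supporting point q'
  have key : ∃ w : EuclideanSpace ℝ (Fin 2), ∃ q' ∈ Q, ‖w‖ = 1 ∧
      Real.cos δ ≤ ⟪v, w⟫ ∧ ⟪w, p - q'⟫ ≤ 0 := by
    rcases le_or_gt 0 φ with hφ0 | hφ0
    · obtain ⟨i, hi1, hi2, hiδ⟩ := exists_dir δ hδ0 φ hφ0 hφmem.2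
      obtain ⟨q', hq'Q, hq'max⟩ := hmax i hi1 hi2
      refine ⟨pt (Real.cos (i * δ)) (Real.sin (i * δ)), q', hq'Q,
        norm_pt_one _ _ (by nlinarith [Real.sin_sq_add_cos_sq (i * δ)]), ?_, ?_⟩
      · have hinner : ⟪v, pt (Real.cos (i * δ)) (Real.sin (i * δ))⟫
            = Real.cos (φ - i * δ) := by
          rw [real_inner_comm, inner_pt, ← ha, ← hb, ← hφcos, ← hφsin, Real.cos_sub]
          ring
        rw [hinner]
        calc Real.cos δ ≤ Real.cos |φ - i * δ| := by
              apply Real.cos_le_cos_of_nonneg_of_le_pi (abs_nonneg _) hδπ.le hiδ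
          _ = Real.cos (φ - i * δ) := Real.cos_abs _
      · have := hq'max p hp
        rw [inner_sub_right]
        linarith
    · obtain ⟨i, hi1, hi2, hiδ⟩ := exists_dir δ hδ0 (φ + π)
        (by linarith [hφmem.1]) (by linarith)
      obtain ⟨q', hq'Q, hq'min⟩ := hmin i hi1 hi2
      refine ⟨-pt (Real.cos (i * δ)) (Real.sin (i * δ)), q', hq'Q, ?_, ?_, ?_⟩
      · rw [norm_neg]
        exact norm_pt_one _ _ (by nlinarith [Real.sin_sq_add_cos_sq (i * δ)])
      · have hinner : ⟪v, -pt (Real.cos (i * δ)) (Real.sin (i * δ))⟫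
            = Real.cos (φ + π - i * δ) := by
          rw [inner_neg_right, real_inner_comm, inner_pt, ← ha, ← hb,
            ← hφcos, ← hφsin]
          have : φ + π - i * δ = π - (i * δ - φ) := by ring
          rw [this, Real.cos_pi_sub, Real.cos_sub]
        rw [hinner]
        calc Real.cos δ ≤ Real.cos |φ + π - i * δ| := by
              apply Real.cos_le_cos_of_nonneg_of_le_pi (abs_nonneg _) hδπ.le hiδ
          _ = Real.cos (φ + π - i * δ) := Real.cos_abs _
      · have := hq'min p hp
        rw [inner_neg_left, inner_sub_right]
        linarith
  obtain ⟨w, q', hq'Q, hw1, hvw, hwpq⟩ := key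
  -- final computation
  have hvd : ⟪v, p - q₀⟫ = d := by
    have hsmul : p - q₀ = ‖p - q₀‖ • v := by
      rw [hv, smul_smul, mul_inv_cancel₀ (norm_ne_zero_iff.mpr hpq0), one_smul]
    rw [hsmul, real_inner_smul_right, real_inner_self_eq_norm_sq, hv1, hnpq]
    ring
  have hq'K : (q' : EuclideanSpace ℝ (Fin 2)) ∈ K := subset_convexHull ℝ _ hq'Q
  have hvq' : ⟪v, q' - q₀⟫ ≤ 0 := by
    have := hproj q' hq'K
    rw [hv, real_inner_smul_left]
    have hinv : 0 ≤ (‖p - q₀‖)⁻¹ := by positivity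
    exact mul_nonpos_of_nonneg_of_nonpos hinv this
  have hstep : d ≤ ⟪v, p - q'⟫ := by
    have : ⟪v, p - q'⟫ = ⟪v, p - q₀⟫ - ⟪v, q' - q₀⟫ := by
      rw [← inner_sub_right]
      congr 1
      abel
    rw [this, hvd]
    linarith
  have hsplit : ⟪v, p - q'⟫ = ⟪w, p - q'⟫ + ⟪v - w, p - q'⟫ := by
    rw [← inner_add_left]
    congr 1
    abel
  have hcs : ⟪v - w, p - q'⟫ ≤ ‖v - w‖ * ‖p - q'‖ := real_inner_le_norm _ _
  have hvwnorm : ‖v - w‖ ≤ δ := by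
    have hsq : ‖v - w‖ ^ 2 = 2 - 2 * ⟪v, w⟫ := by
      rw [norm_sub_sq_real, hv1, hw1]
      ring
    have h1 : ‖v - w‖ ^ 2 ≤ δ ^ 2 := by
      rw [hsq]
      have := two_sub_two_cos_le δ hδ0.le hδπ.le
      linarith
    nlinarith [norm_nonneg (v - w)]
  have hpq' : ‖p - q'‖ ≤ fdiam P hP := by
    rw [← dist_eq_norm]
    exact hfd p hp q' (hQP hq'Q)
  calc d ≤ ⟪v, p - q'⟫ := hstep
    _ = ⟪w, p - q'⟫ + ⟪v - w, p - q'⟫ := hsplit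
    _ ≤ ‖v - w‖ * ‖p - q'‖ := by linarith
    _ ≤ δ * fdiam P hP := by
        apply mul_le_mul hvwnorm hpq' (norm_nonneg _) hδ0.le
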